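/- Let ∅ ≠ S ⊂ l∞^n be a closed subset. Then the following are equivalent: (i) S is injective; (ii) there exists x ∈ S such that S ∩ B(x,r) is injective for every r ∈ (0,∞), where B(x,r) is the closed ball of radius r around x in l∞^n; (iii) there exists an increasing sequence (X_m)_{m∈ℕ} of injective subsets of S (i.e. X_m ⊂ X_{m+1} for all m) such that S = ⋃_{m∈ℕ} X_m. -/

import Mathlib

open Set Metric

/-- A metric space `X` is *injective* if for all metric spaces `A`, `B`, every isometric
embedding `i : A → B` and every `1`-Lipschitz map `f : A → X`, there is a `1`-Lipschitz
map `g : B → X` with `g ∘ i = f`. -/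
def IsInjectiveMetricSpace (X : Type) [MetricSpace X] : Prop :=
  ∀ (A B : Type) [MetricSpace A] [MetricSpace B], ∀ (i : A → B) (f : A → X),
    Isometry i → LipschitzWith 1 f →
      ∃ g : B → X, LipschitzWith 1 g ∧ ∀ a, g (i a) = f a

/-- A subset of `l∞ⁿ = (Fin n → ℝ)` (whose product metric is the sup-metric) is injective
if it is an injective metric space with the induced metric. -/
def IsInjectiveSubset {n : ℕ} (S : Set (Fin n → ℝ)) : Prop :=
  IsInjectiveMetricSpace S

section Aux

open Filter

variable {n : ℕ}

/-- If `S` is injective then it is a 1-Lipschitz retract of `l∞ⁿ`. -/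
lemma IsInjectiveSubset.exists_retract {S : Set (Fin n → ℝ)} (h : IsInjectiveSubset S) :
    ∃ r : (Fin n → ℝ) → (Fin n → ℝ), LipschitzWith 1 r ∧ (∀ y, r y ∈ S) ∧ ∀ x ∈ S, r x = x := by
  obtain ⟨g, hg, hgi⟩ := h S (Fin n → ℝ) Subtype.val id isometry_subtype_coe LipschitzWith.id
  refine ⟨fun y => (g y : Fin n → ℝ), by simpa [Function.comp_def] using isometry_subtype_coe.lipschitz.comp hg,
    fun y => (g y).2, fun x hx => ?_⟩
  have := hgi ⟨x, hx⟩
  simpa using congrArg Subtype.val this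

/-- Any 1-Lipschitz map into `l∞ⁿ` extends along an isometric embedding. -/
lemma exists_lipschitz_extension {A B : Type} [MetricSpace A] [MetricSpace B]
    (i : A → B) (hi : Isometry i) (F : A → (Fin n → ℝ)) (hF : LipschitzWith 1 F) :
    ∃ G : B → (Fin n → ℝ), LipschitzWith 1 G ∧ ∀ a, G (i a) = F a := by
  classical
  cases isEmpty_or_nonempty A with
  | inl h => exact ⟨fun _ => 0, LipschitzWith.const' 0, fun a => h.elim a⟩
  | inr h =>
    set f' : B → (Fin n → ℝ) := fun b => if hb : ∃ a, i a = b then F hb.choose else 0 with hf'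
    have key : ∀ a : A, f' (i a) = F a := by
      intro a
      have hb : ∃ a', i a' = i a := ⟨a, rfl⟩
      simp only [hf', dif_pos hb]
      exact congrArg F (hi.injective hb.choose_spec)
    have hlip : LipschitzOnWith 1 f' (Set.range i) := by
      rw [lipschitzOnWith_iff_dist_le_mul]
      rintro x ⟨a, rfl⟩ y ⟨a', rfl⟩
      rw [key a, key a', hi.dist_eq a a']
      simpa using hF.dist_le_mul a a'
    obtain ⟨G, hG, hEq⟩ := hlip.extend_pi
    exact ⟨G, hG, fun a => (hEq ⟨a, rfl⟩).symm.trans (key a)⟩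

/-- If `S` is a 1-Lipschitz retract of `l∞ⁿ` then it is injective. -/
lemma isInjectiveSubset_of_retract {S : Set (Fin n → ℝ)}
    (r : (Fin n → ℝ) → (Fin n → ℝ)) (hr : LipschitzWith 1 r) (hrS : ∀ y, r y ∈ S)
    (hfix : ∀ x ∈ S, r x = x) : IsInjectiveSubset S := by
  intro A B _ _ i f hi hf
  obtain ⟨G, hG, hGi⟩ := exists_lipschitz_extension i hi (fun a => (f a : Fin n → ℝ))
    (by simpa [Function.comp_def] using isometry_subtype_coe.lipschitz.comp hf)
  refine ⟨fun b => ⟨r (G b), hrS _⟩, ?_, ?_⟩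
  · exact LipschitzWith.subtype_mk (by simpa [Function.comp_def] using hr.comp hG) _
  · intro a
    apply Subtype.ext
    show r (G (i a)) = (f a : Fin n → ℝ)
    rw [hGi]
    exact hfix _ (f a).2

/-- The clamping retraction of `l∞ⁿ` onto the closed ball of radius `ρ` around `x`. -/
noncomputable def clampMap (x : Fin n → ℝ) (ρ : ℝ) : (Fin n → ℝ) → (Fin n → ℝ) :=
  fun y i => x i + max (-ρ) (min ρ (y i - x i))

lemma clampMap_lipschitz (x : Fin n → ℝ) (ρ : ℝ) : LipschitzWith 1 (clampMap x ρ) := by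
  apply LipschitzWith.of_dist_le_mul
  intro y z
  rw [NNReal.coe_one, one_mul]
  rw [dist_pi_le_iff dist_nonneg]
  intro i
  have h1 : dist (clampMap x ρ y i) (clampMap x ρ z i)
      = |max (-ρ) (min ρ (y i - x i)) - max (-ρ) (min ρ (z i - x i))| := by
    simp [clampMap, Real.dist_eq]
  rw [h1]
  calc |max (-ρ) (min ρ (y i - x i)) - max (-ρ) (min ρ (z i - x i))|
      = |max (min ρ (y i - x i)) (-ρ) - max (min ρ (z i - x i)) (-ρ)| := by
        rw [max_comm (-ρ), max_comm (-ρ)]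
    _ ≤ |min ρ (y i - x i) - min ρ (z i - x i)| := abs_max_sub_max_le_abs _ _ _
    _ ≤ max |ρ - ρ| |(y i - x i) - (z i - x i)| := abs_min_sub_min_le_max _ _ _ _
    _ = |y i - z i| := by
        rw [sub_self, abs_zero]
        rw [max_eq_right (abs_nonneg _)]
        ring_nf
    _ ≤ dist y z := by rw [← Real.dist_eq]; exact dist_le_pi_dist y z i

lemma clampMap_mem (x : Fin n → ℝ) {ρ : ℝ} (hρ : 0 ≤ ρ) (y : Fin n → ℝ) :
    clampMap x ρ y ∈ closedBall x ρ := by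
  rw [mem_closedBall, dist_pi_le_iff hρ]
  intro i
  have : dist (clampMap x ρ y i) (x i) = |max (-ρ) (min ρ (y i - x i))| := by
    simp [clampMap, Real.dist_eq]
  rw [this, abs_le]
  constructor
  · exact le_max_left _ _
  · exact max_le (by linarith) (min_le_left _ _)

lemma clampMap_fix (x : Fin n → ℝ) {ρ : ℝ} {z : Fin n → ℝ} (hz : z ∈ closedBall x ρ) :
    clampMap x ρ z = z := by
  funext i
  have hb : |z i - x i| ≤ ρ := by
    rw [← Real.dist_eq]
    exact (dist_le_pi_dist z x i).trans hz
  rw [abs_le] at hb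
  simp only [clampMap]
  rw [min_eq_right hb.2, max_eq_right hb.1]
  ring

/-- An increasing union of injective subsets which is closed is injective. -/
lemma isInjectiveSubset_of_union {S : Set (Fin n → ℝ)} (hcl : IsClosed S)
    (X : ℕ → Set (Fin n → ℝ)) (hXS : ∀ m, X m ⊆ S) (hmono : ∀ m, X m ⊆ X (m + 1))
    (hinj : ∀ m, IsInjectiveSubset (X m)) (hS : S = ⋃ m, X m) :
    IsInjectiveSubset S := by
  classical
  choose r hr hrX hfix using fun m => (hinj m).exists_retract
  have hchain : ∀ m k, m ≤ k → X m ⊆ X k := by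
    intro m k hmk
    induction hmk with
    | refl => exact subset_rfl
    | step h ih => exact ih.trans (hmono _)
  set x0 : Fin n → ℝ := r 0 0 with hx0def
  have hx0 : ∀ m, x0 ∈ X m := fun m => hchain 0 m (Nat.zero_le m) (hrX 0 0)
  have hrx0 : ∀ m, r m x0 = x0 := fun m => hfix m x0 (hx0 m)
  -- ultrafilter limit
  set U : Ultrafilter ℕ := Ultrafilter.of Filter.atTop with hU
  have hUatTop : (U : Filter ℕ) ≤ Filter.atTop := Ultrafilter.of_le _
  have hball : ∀ y, ∀ m, r m y ∈ closedBall x0 (dist y x0) := by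
    intro y m
    rw [mem_closedBall]
    calc dist (r m y) x0 = dist (r m y) (r m x0) := by rw [hrx0]
      _ ≤ dist y x0 := by simpa using (hr m).dist_le_mul y x0
  have hlim : ∀ y : Fin n → ℝ, ∃ p, Filter.Tendsto (fun m => r m y) U (nhds p) := by
    intro y
    have hcomp : IsCompact (closedBall x0 (dist y x0)) := isCompact_closedBall _ _
    have hle : (U.map (fun m => r m y) : Filter (Fin n → ℝ)) ≤ 𝓟 (closedBall x0 (dist y x0)) := by
      rw [Filter.le_principal_iff]
      exact Filter.mem_map.mpr (Filter.Eventually.of_forall (fun m => hball y m))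
    obtain ⟨p, _, hp⟩ := hcomp.ultrafilter_le_nhds (U.map (fun m => r m y)) hle
    exact ⟨p, hp⟩
  choose R hR using hlim
  have hRS : ∀ y, R y ∈ S := by
    intro y
    exact hcl.mem_of_tendsto (hR y) (Filter.Eventually.of_forall fun m => hXS m (hrX m y))
  have hRfix : ∀ x ∈ S, R x = x := by
    intro x hx
    rw [hS] at hx
    obtain ⟨_, ⟨k, rfl⟩, hk⟩ := hx
    have hev : ∀ᶠ m in (U : Filter ℕ), r m x = x := by
      apply hUatTop
      filter_upwards [Filter.eventually_ge_atTop k] with m hm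
      exact hfix m x (hchain k m hm hk)
    have : Filter.Tendsto (fun m => r m x) U (nhds x) :=
      Filter.Tendsto.congr' (Filter.EventuallyEq.symm hev) tendsto_const_nhds
    exact tendsto_nhds_unique (hR x) this
  have hRlip : LipschitzWith 1 R := by
    apply LipschitzWith.of_dist_le_mul
    intro y z
    rw [NNReal.coe_one, one_mul]
    have htd : Filter.Tendsto (fun m => dist (r m y) (r m z)) U (nhds (dist (R y) (R z))) :=
      (hR y).dist (hR z)
    exact le_of_tendsto htd (Filter.Eventually.of_forall fun m => by
      simpa using (hr m).dist_le_mul y z)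
  exact isInjectiveSubset_of_retract R hRlip hRS hRfix

end Aux

/-- For a nonempty closed subset `S ⊆ l∞ⁿ`, the following are equivalent: (i) `S` is
injective; (ii) there is `x ∈ S` such that `S ∩ B(x,r)` is injective for every `r > 0`;
(iii) `S` is the union of an increasing sequence of injective subsets. -/
theorem closed_injective_tfae {n : ℕ} (S : Set (Fin n → ℝ)) (hne : S.Nonempty)
    (hcl : IsClosed S) :
    (IsInjectiveSubset S ↔
        ∃ x ∈ S, ∀ r : ℝ, 0 < r → IsInjectiveSubset (S ∩ closedBall x r)) ∧
      (IsInjectiveSubset S ↔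
        ∃ X : ℕ → Set (Fin n → ℝ), (∀ m, X m ⊆ S) ∧ (∀ m, X m ⊆ X (m + 1)) ∧
          (∀ m, IsInjectiveSubset (X m)) ∧ S = ⋃ m, X m) := by
  -- (i) → (ii)
  have h12 : IsInjectiveSubset S →
      ∃ x ∈ S, ∀ r : ℝ, 0 < r → IsInjectiveSubset (S ∩ closedBall x r) := by
    intro h
    obtain ⟨r, hr, hrS, hfix⟩ := h.exists_retract
    obtain ⟨x, hx⟩ := hne
    refine ⟨x, hx, fun ρ hρ => ?_⟩
    refine isInjectiveSubset_of_retract (fun y => r (clampMap x ρ y))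
      (by simpa [Function.comp_def] using hr.comp (clampMap_lipschitz x ρ)) ?_ ?_
    · intro y
      refine ⟨hrS _, ?_⟩
      rw [mem_closedBall]
      calc dist (r (clampMap x ρ y)) x = dist (r (clampMap x ρ y)) (r x) := by
            rw [hfix x hx]
        _ ≤ dist (clampMap x ρ y) x := by simpa using hr.dist_le_mul _ x
        _ ≤ ρ := clampMap_mem x hρ.le y
    · rintro z ⟨hzS, hzB⟩
      show r (clampMap x ρ z) = z
      rw [clampMap_fix x hzB]
      exact hfix z hzS
  -- (ii) → (iii)
  have h23 : (∃ x ∈ S, ∀ r : ℝ, 0 < r → IsInjectiveSubset (S ∩ closedBall x r)) →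
      ∃ X : ℕ → Set (Fin n → ℝ), (∀ m, X m ⊆ S) ∧ (∀ m, X m ⊆ X (m + 1)) ∧
        (∀ m, IsInjectiveSubset (X m)) ∧ S = ⋃ m, X m := by
    rintro ⟨x, hx, h⟩
    refine ⟨fun m => S ∩ closedBall x (m + 1), fun m => inter_subset_left, ?_, ?_, ?_⟩
    · intro m
      apply inter_subset_inter_right
      apply closedBall_subset_closedBall
      push_cast
      linarith
    · intro m
      exact h (m + 1) (by positivity)
    · ext s
      simp only [mem_iUnion, mem_inter_iff, mem_closedBall]
      constructor
      · intro hs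
        obtain ⟨m, hm⟩ := exists_nat_ge (dist s x)
        exact ⟨m, hs, hm.trans (by linarith)⟩
      · rintro ⟨m, hm, _⟩
        exact hm
  -- (iii) → (i)
  have h31 : (∃ X : ℕ → Set (Fin n → ℝ), (∀ m, X m ⊆ S) ∧ (∀ m, X m ⊆ X (m + 1)) ∧
      (∀ m, IsInjectiveSubset (X m)) ∧ S = ⋃ m, X m) → IsInjectiveSubset S := by
    rintro ⟨X, hXS, hmono, hinj, hS⟩
    exact isInjectiveSubset_of_union hcl X hXS hmono hinj hS
  refine ⟨⟨h12, fun h => h31 (h23 h)⟩, ⟨fun h => h23 (h12 h), h31⟩⟩
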